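/- Suppose self-adjoint ±1-eigenvalue observables X_A, Y_A (anticommuting, acting on Alice's factor) and X'_B, Y'_B (acting on Bob's factor) satisfy ⟨ψ|(X_A X'_B + Y_A Y'_B)|ψ⟩ ≥ 2 - ε for a unit vector ψ with 0 < ε < 1. Then ‖(X'_B Y'_B + Y'_B X'_B)ψ‖ ≤ 8√ε. -/

import Mathlib

lemma iso_of_sa {H : Type*} [NormedAddCommGroup H] [InnerProductSpace ℂ H] [CompleteSpace H]
    (A : H →L[ℂ] H) (hA : IsSelfAdjoint A) (hA2 : A * A = 1) (v : H) : ‖A v‖ = ‖v‖ := by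
  have hAA : A (A v) = v := by
    have := congrArg (fun T : H →L[ℂ] H => T v) hA2
    simpa using this
  have h1 : (inner ℂ (A v) (A v) : ℂ) = inner ℂ v v := by
    have hs := hA.isSymmetric (A v) v
    simpa [hAA] using hs.symm
  rw [@norm_eq_sqrt_re_inner ℂ, @norm_eq_sqrt_re_inner ℂ H, h1]

theorem stmt_3 {H : Type*} [NormedAddCommGroup H] [InnerProductSpace ℂ H] [CompleteSpace H]
    (XA YA XB YB : H →L[ℂ] H)
    (hXA : IsSelfAdjoint XA) (hYA : IsSelfAdjoint YA)
    (hXB : IsSelfAdjoint XB) (hYB : IsSelfAdjoint YB)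
    (hXA2 : XA * XA = 1) (hYA2 : YA * YA = 1)
    (hXB2 : XB * XB = 1) (hYB2 : YB * YB = 1)
    (hanti : XA * YA + YA * XA = 0)
    (hcXX : XA * XB = XB * XA) (hcXY : XA * YB = YB * XA)
    (hcYX : YA * XB = XB * YA) (hcYY : YA * YB = YB * YA)
    (ψ : H) (hψ : ‖ψ‖ = 1) (ε : ℝ) (hε0 : 0 < ε) (hε1 : ε < 1)
    (h : 2 - ε ≤ (inner ℂ ψ (((XA * XB + YA * YB) : H →L[ℂ] H) ψ) : ℂ).re) :
    ‖((XB * YB + YB * XB) : H →L[ℂ] H) ψ‖ ≤ 8 * Real.sqrt ε := by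
  set P := XA * XB with hP
  set Q := YA * YB with hQ
  have isoXA := iso_of_sa XA hXA hXA2
  have isoYA := iso_of_sa YA hYA hYA2
  have isoXB := iso_of_sa XB hXB hXB2
  have isoYB := iso_of_sa YB hYB hYB2
  have isoP : ∀ v, ‖P v‖ = ‖v‖ := fun v => by
    rw [hP, ContinuousLinearMap.mul_apply, isoXA, isoXB]
  have isoQ : ∀ v, ‖Q v‖ = ‖v‖ := fun v => by
    rw [hQ, ContinuousLinearMap.mul_apply, isoYA, isoYB]
  -- split the correlation
  have hsplit : (inner ℂ ψ (((XA * XB + YA * YB) : H →L[ℂ] H) ψ) : ℂ).re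
      = (inner ℂ ψ (P ψ) : ℂ).re + (inner ℂ ψ (Q ψ) : ℂ).re := by
    rw [ContinuousLinearMap.add_apply, inner_add_right, Complex.add_re]
  have hPle : (inner ℂ ψ (P ψ) : ℂ).re ≤ 1 := by
    calc (inner ℂ ψ (P ψ) : ℂ).re ≤ ‖(inner ℂ ψ (P ψ) : ℂ)‖ := Complex.re_le_norm _
    _ ≤ ‖ψ‖ * ‖P ψ‖ := norm_inner_le_norm ψ (P ψ)
    _ = 1 := by rw [isoP, hψ]; ring
  have hQle : (inner ℂ ψ (Q ψ) : ℂ).re ≤ 1 := by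
    calc (inner ℂ ψ (Q ψ) : ℂ).re ≤ ‖(inner ℂ ψ (Q ψ) : ℂ)‖ := Complex.re_le_norm _
    _ ≤ ‖ψ‖ * ‖Q ψ‖ := norm_inner_le_norm ψ (Q ψ)
    _ = 1 := by rw [isoQ, hψ]; ring
  have hPre : 1 - ε ≤ (inner ℂ ψ (P ψ) : ℂ).re := by rw [hsplit] at h; linarith
  have hQre : 1 - ε ≤ (inner ℂ ψ (Q ψ) : ℂ).re := by rw [hsplit] at h; linarith
  -- error bounds
  have sqrt2ε : (0:ℝ) ≤ 2 * ε := by linarith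
  have errbound : ∀ R : H →L[ℂ] H, (∀ v, ‖R v‖ = ‖v‖) →
      1 - ε ≤ (inner ℂ ψ (R ψ) : ℂ).re → ‖R ψ - ψ‖ ≤ Real.sqrt (2 * ε) := by
    intro R isoR hre
    have hsq : ‖R ψ - ψ‖ ^ 2 ≤ 2 * ε := by
      have hns := @norm_sub_sq ℂ H _ _ _ (R ψ) ψ
      have hsym : RCLike.re (inner ℂ (R ψ) ψ : ℂ) = RCLike.re (inner ℂ ψ (R ψ) : ℂ) :=
        inner_re_symm _ _
      rw [hns, hsym, isoR, hψ]
      have : RCLike.re (inner ℂ ψ (R ψ) : ℂ) = (inner ℂ ψ (R ψ) : ℂ).re := rfl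
      rw [this]
      nlinarith
    calc ‖R ψ - ψ‖ = Real.sqrt (‖R ψ - ψ‖ ^ 2) := (Real.sqrt_sq (norm_nonneg _)).symm
    _ ≤ Real.sqrt (2 * ε) := Real.sqrt_le_sqrt hsq
  have errP := errbound P isoP hPre
  have errQ := errbound Q isoQ hQre
  -- operator identities
  have hYAXA : YA * XA = -(XA * YA) := eq_neg_of_add_eq_zero_right hanti
  have idA : (XB * YB) * (YA * YB) = YA * XB := by
    rw [mul_assoc, ← mul_assoc YB YA YB, ← hcYY, mul_assoc YA YB YB, hYB2, mul_one, ← hcYX]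
  have idB : (YA * XB) * (XA * XB) = YA * XA := by
    rw [mul_assoc, ← mul_assoc XB XA XB, ← hcXX, mul_assoc XA XB XB, hXB2, mul_one]
  have idC : (YB * XB) * (XA * XB) = XA * YB := by
    rw [mul_assoc, ← mul_assoc XB XA XB, ← hcXX, mul_assoc XA XB XB, hXB2, mul_one, ← hcXY]
  have idD : (XA * YB) * (YA * YB) = XA * YA := by
    rw [mul_assoc, ← mul_assoc YB YA YB, ← hcYY, mul_assoc YA YB YB, hYB2, mul_one]
  -- pointwise consequences
  have appA : (XB * YB) (Q ψ) = (YA * XB) ψ := by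
    rw [hQ, ← ContinuousLinearMap.mul_apply, idA]
  have appB : (YA * XB) (P ψ) = (YA * XA) ψ := by
    rw [hP, ← ContinuousLinearMap.mul_apply, idB]
  have appC : (YB * XB) (P ψ) = (XA * YB) ψ := by
    rw [hP, ← ContinuousLinearMap.mul_apply, idC]
  have appD : (XA * YB) (Q ψ) = (XA * YA) ψ := by
    rw [hQ, ← ContinuousLinearMap.mul_apply, idD]
  have isoXBYB : ∀ v, ‖(XB * YB) v‖ = ‖v‖ := fun v => by
    rw [ContinuousLinearMap.mul_apply, isoXB, isoYB]
  have isoYAXB : ∀ v, ‖(YA * XB) v‖ = ‖v‖ := fun v => by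
    rw [ContinuousLinearMap.mul_apply, isoYA, isoXB]
  have isoYBXB : ∀ v, ‖(YB * XB) v‖ = ‖v‖ := fun v => by
    rw [ContinuousLinearMap.mul_apply, isoYB, isoXB]
  have isoXAYB : ∀ v, ‖(XA * YB) v‖ = ‖v‖ := fun v => by
    rw [ContinuousLinearMap.mul_apply, isoXA, isoYB]
  have t1 : ‖(XB * YB) ψ + (XA * YA) ψ‖ ≤ 2 * Real.sqrt (2 * ε) := by
    have e1 : ‖(XB * YB) ψ - (XB * YB) (Q ψ)‖ ≤ Real.sqrt (2 * ε) := by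
      rw [← map_sub, isoXBYB, ← norm_neg]
      simpa using errQ
    have e2 : ‖(XB * YB) (Q ψ) + (XA * YA) ψ‖ ≤ Real.sqrt (2 * ε) := by
      have hneg : (XA * YA) ψ = -((YA * XB) (P ψ)) := by
        rw [appB, hYAXA]; simp
      rw [appA, hneg, ← sub_eq_add_neg, ← map_sub, isoYAXB, ← norm_neg]
      simpa using errP
    calc ‖(XB * YB) ψ + (XA * YA) ψ‖
        = ‖((XB * YB) ψ - (XB * YB) (Q ψ)) + ((XB * YB) (Q ψ) + (XA * YA) ψ)‖ := by
          congr 1; abel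
      _ ≤ ‖(XB * YB) ψ - (XB * YB) (Q ψ)‖ + ‖(XB * YB) (Q ψ) + (XA * YA) ψ‖ := norm_add_le _ _
      _ ≤ 2 * Real.sqrt (2 * ε) := by linarith
  have t2 : ‖(YB * XB) ψ - (XA * YA) ψ‖ ≤ 2 * Real.sqrt (2 * ε) := by
    have e1 : ‖(YB * XB) ψ - (YB * XB) (P ψ)‖ ≤ Real.sqrt (2 * ε) := by
      rw [← map_sub, isoYBXB, ← norm_neg]
      simpa using errP
    have e2 : ‖(YB * XB) (P ψ) - (XA * YA) ψ‖ ≤ Real.sqrt (2 * ε) := by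
      rw [appC, ← appD, ← map_sub, isoXAYB, ← norm_neg]
      simpa using errQ
    calc ‖(YB * XB) ψ - (XA * YA) ψ‖
        = ‖((YB * XB) ψ - (YB * XB) (P ψ)) + ((YB * XB) (P ψ) - (XA * YA) ψ)‖ := by
          congr 1; abel
      _ ≤ ‖(YB * XB) ψ - (YB * XB) (P ψ)‖ + ‖(YB * XB) (P ψ) - (XA * YA) ψ‖ := norm_add_le _ _
      _ ≤ 2 * Real.sqrt (2 * ε) := by linarith
  have hfinal : ‖((XB * YB + YB * XB) : H →L[ℂ] H) ψ‖ ≤ 4 * Real.sqrt (2 * ε) := by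
    calc ‖((XB * YB + YB * XB) : H →L[ℂ] H) ψ‖
        = ‖((XB * YB) ψ + (XA * YA) ψ) + ((YB * XB) ψ - (XA * YA) ψ)‖ := by
          rw [ContinuousLinearMap.add_apply]; congr 1; abel
      _ ≤ ‖(XB * YB) ψ + (XA * YA) ψ‖ + ‖(YB * XB) ψ - (XA * YA) ψ‖ := norm_add_le _ _
      _ ≤ 4 * Real.sqrt (2 * ε) := by linarith
  have hsqrt : Real.sqrt (2 * ε) ≤ 2 * Real.sqrt ε := by
    rw [Real.sqrt_mul (by norm_num : (0:ℝ) ≤ 2)]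
    have h2 : Real.sqrt 2 ≤ 2 := by
      nlinarith [Real.sq_sqrt (by norm_num : (0:ℝ) ≤ 2), Real.sqrt_nonneg 2]
    have := Real.sqrt_nonneg ε
    nlinarith
  linarith
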